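/- Let d ≥ 2 and fix ε > 0 such that max(2dε, 10ε) < 1 and 16πd√ε < 1. Let G be a d-layer ReLU network satisfying the R2WDC with constant ε. Then for all nonzero x, y ∈ ℝ^k: ⟨G(x), G(y)⟩ ≥ (1/(4π)) (1/2^d) ‖x‖‖y‖. -/

import Mathlib

open scoped BigOperators
open Real MeasureTheory ProbabilityTheory Filter
open scoped Matrix

noncomputable section

namespace R2WDCFormal

/-- Euclidean inner product on `Fin n → ℝ`. -/
def dotp {n : ℕ} (r s : Fin n → ℝ) : ℝ := ∑ i, r i * s i

/-- Euclidean norm on `Fin n → ℝ`. -/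
def vnorm {n : ℕ} (r : Fin n → ℝ) : ℝ := Real.sqrt (dotp r r)

/-- Angle between two vectors. -/
def ang {n : ℕ} (r s : Fin n → ℝ) : ℝ := Real.arccos (dotp r s / (vnorm r * vnorm s))

/-- Outer product of two vectors, as a matrix. -/
def outer {n : ℕ} (u v : Fin n → ℝ) : Matrix (Fin n) (Fin n) ℝ := Matrix.of fun i j => u i * v j

/-- The matrix sending `r̂ ↦ ŝ`, `ŝ ↦ r̂` with kernel `span{r,s}ᗮ`. -/
def Mswap {n : ℕ} (r s : Fin n → ℝ) : Matrix (Fin n) (Fin n) ℝ :=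
  outer ((vnorm ((vnorm r)⁻¹ • r + (vnorm s)⁻¹ • s))⁻¹ • ((vnorm r)⁻¹ • r + (vnorm s)⁻¹ • s))
        ((vnorm ((vnorm r)⁻¹ • r + (vnorm s)⁻¹ • s))⁻¹ • ((vnorm r)⁻¹ • r + (vnorm s)⁻¹ • s)) -
  outer ((vnorm ((vnorm r)⁻¹ • r - (vnorm s)⁻¹ • s))⁻¹ • ((vnorm r)⁻¹ • r - (vnorm s)⁻¹ • s))
        ((vnorm ((vnorm r)⁻¹ • r - (vnorm s)⁻¹ • s))⁻¹ • ((vnorm r)⁻¹ • r - (vnorm s)⁻¹ • s))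

/-- The matrix `Q_{r,s}`. -/
def Qmat {n : ℕ} (r s : Fin n → ℝ) : Matrix (Fin n) (Fin n) ℝ :=
  if r = 0 ∨ s = 0 then 0
  else ((π - ang r s) / (2 * π)) • (1 : Matrix (Fin n) (Fin n) ℝ) +
    (Real.sin (ang r s) / (2 * π)) • Mswap r s

/-- `W_{+,x} = diag(Wx > 0) W`. -/
def Wplus {m n : ℕ} (W : Matrix (Fin m) (Fin n) ℝ) (x : Fin n → ℝ) : Matrix (Fin m) (Fin n) ℝ :=
  Matrix.of fun i j => if 0 < W.mulVec x i then W i j else 0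

/-- Entrywise ReLU. -/
def reluVec {n : ℕ} (v : Fin n → ℝ) : Fin n → ℝ := fun i => max (v i) 0

/-- Sub-network `G_j` of the ReLU network with layer sizes `nn` and weights `W`. -/
def subnet (nn : ℕ → ℕ) (W : ∀ i : ℕ, Matrix (Fin (nn (i + 1))) (Fin (nn i)) ℝ) :
    ∀ j : ℕ, (Fin (nn 0) → ℝ) → Fin (nn j) → ℝ
  | 0, x => x
  | j + 1, x => reluVec ((W j).mulVec (subnet nn W j x))

/-- `Λ_{j,x} = W_{j,+,x} ⋯ W_{1,+,x}`. -/
def LambdaMat (nn : ℕ → ℕ) (W : ∀ i : ℕ, Matrix (Fin (nn (i + 1))) (Fin (nn i)) ℝ) :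
    ∀ j : ℕ, (Fin (nn 0) → ℝ) → Matrix (Fin (nn j)) (Fin (nn 0)) ℝ
  | 0, _ => 1
  | j + 1, x => Wplus (W j) (subnet nn W j x) * LambdaMat nn W j x

/-- Range Restricted Weight Distribution Condition with constant `ε` of a `d`-layer network. -/
def R2WDCond (nn : ℕ → ℕ) (d : ℕ)
    (W : ∀ i : ℕ, Matrix (Fin (nn (i + 1))) (Fin (nn i)) ℝ) (ε : ℝ) : Prop :=
  ∀ i < d, ∀ x y x₁ x₂ x₃ x₄ : Fin (nn 0) → ℝ,
    |dotp (((Wplus (W i) (subnet nn W i x))ᵀ * Wplus (W i) (subnet nn W i y) -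
        Qmat (subnet nn W i x) (subnet nn W i y)).mulVec
        (subnet nn W i x₁ - subnet nn W i x₂)) (subnet nn W i x₃ - subnet nn W i x₄)| ≤
      ε * vnorm (subnet nn W i x₁ - subnet nn W i x₂) * vnorm (subnet nn W i x₃ - subnet nn W i x₄)

/-- Range Restricted Isometry Condition of `A` with respect to the network, with constant `ε`. -/
def RRICond (nn : ℕ → ℕ) (d : ℕ)
    (W : ∀ i : ℕ, Matrix (Fin (nn (i + 1))) (Fin (nn i)) ℝ) {mm : ℕ}
    (A : Matrix (Fin mm) (Fin (nn d)) ℝ) (ε : ℝ) : Prop :=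
  ∀ x₁ x₂ x₃ x₄ : Fin (nn 0) → ℝ,
    |dotp ((Aᵀ * A - 1).mulVec (subnet nn W d x₁ - subnet nn W d x₂))
        (subnet nn W d x₃ - subnet nn W d x₄)| ≤
      ε * vnorm (subnet nn W d x₁ - subnet nn W d x₂) * vnorm (subnet nn W d x₃ - subnet nn W d x₄)

/-- The angle-distortion function `g`. -/
def gAngle (θ : ℝ) : ℝ := Real.arccos (((π - θ) * Real.cos θ + Real.sin θ) / π)

/-- The deterministic vector field `h̃_{x,y}`. -/
def htilde {k : ℕ} (d : ℕ) (x y : Fin k → ℝ) : Fin k → ℝ :=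
  (1 / 2 ^ d : ℝ) • ((∏ i ∈ Finset.range d, (π - gAngle^[i] (ang x y)) / π) • y +
    (∑ i ∈ Finset.Ico 1 d, Real.sin (gAngle^[i] (ang x y)) / π *
      ∏ j ∈ Finset.Ico (i + 1) d, (π - gAngle^[j] (ang x y)) / π) •
      (vnorm y • (vnorm x)⁻¹ • x))

/-- Spectral (ℓ²-operator) norm of a matrix. -/
def specNorm {a b : ℕ} (M : Matrix (Fin a) (Fin b) ℝ) : ℝ :=
  ⨆ v : {v : Fin b → ℝ // vnorm v ≤ 1}, vnorm (M.mulVec v)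

/-- The entries of the random matrix `W` are i.i.d. `N(0, v)`. -/
def IIDGaussian {Ω : Type*} [MeasurableSpace Ω] (μ : Measure Ω) {a b : ℕ}
    (W : Ω → Fin a → Fin b → ℝ) (v : NNReal) : Prop :=
  Measure.map W μ = Measure.pi fun _ : Fin a => Measure.pi fun _ : Fin b => gaussianReal 0 v

/-- The noise factor `ω`. -/
def omegaNoise (nn : ℕ → ℕ) (d mm : ℕ) : ℝ :=
  2 / 2 ^ ((d : ℝ) / 2) * Real.sqrt (13 / 12) *
    Real.sqrt ((nn 0 : ℝ) / mm * Real.log (5 * ∏ j ∈ Finset.Icc 1 d, Real.exp 1 * nn j / nn 0))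

/-- Clarke subdifferential of `f` at `x`: the convex hull of all limits of gradients of `f`
at nearby differentiability points. -/
def clarkeSubdiff {k : ℕ} (f : (Fin k → ℝ) → ℝ) (x : Fin k → ℝ) : Set (Fin k → ℝ) :=
  convexHull ℝ {v : Fin k → ℝ | ∃ u : ℕ → Fin k → ℝ,
    (∀ t, DifferentiableAt ℝ f (u t)) ∧
    Tendsto u atTop (nhds x) ∧
    Tendsto (fun t => fun i => fderiv ℝ f (u t) (Pi.single i 1)) atTop (nhds v)}

/-- The compressed sensing objective `f_cs`. -/
def fcs (nn : ℕ → ℕ) (d : ℕ) (W : ∀ i : ℕ, Matrix (Fin (nn (i + 1))) (Fin (nn i)) ℝ)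
    {mm : ℕ} (A : Matrix (Fin mm) (Fin (nn d)) ℝ) (b : Fin mm → ℝ)
    (x : Fin (nn 0) → ℝ) : ℝ :=
  1 / 2 * vnorm (b - A.mulVec (subnet nn W d x)) ^ 2

section Basic

variable {n m : ℕ}

lemma dotp_comm (r s : Fin n → ℝ) : dotp r s = dotp s r :=
  Finset.sum_congr rfl fun i _ => mul_comm _ _

lemma dotp_self_nonneg (r : Fin n → ℝ) : 0 ≤ dotp r r :=
  Finset.sum_nonneg fun i _ => mul_self_nonneg _

lemma vnorm_nonneg (r : Fin n → ℝ) : 0 ≤ vnorm r := Real.sqrt_nonneg _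

lemma vnorm_sq (r : Fin n → ℝ) : vnorm r ^ 2 = dotp r r := Real.sq_sqrt (dotp_self_nonneg r)

lemma dotp_self_pos {r : Fin n → ℝ} (h : r ≠ 0) : 0 < dotp r r := by
  rcases Function.ne_iff.1 h with ⟨i, hi⟩
  exact Finset.sum_pos' (fun j _ => mul_self_nonneg _)
    ⟨i, Finset.mem_univ i, mul_self_pos.2 hi⟩

lemma vnorm_pos {r : Fin n → ℝ} (h : r ≠ 0) : 0 < vnorm r :=
  Real.sqrt_pos.2 (dotp_self_pos h)

lemma eq_zero_of_dotp_self {r : Fin n → ℝ} (h : dotp r r = 0) : r = 0 := by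
  by_contra hc
  exact absurd h (ne_of_gt (dotp_self_pos hc))

lemma abs_dotp_le (r s : Fin n → ℝ) : |dotp r s| ≤ vnorm r * vnorm s := by
  have h : (dotp r s) ^ 2 ≤ dotp r r * dotp s s := by
    have := Finset.sum_mul_sq_le_sq_mul_sq Finset.univ r s
    simpa [dotp, pow_two] using this
  have h2 : |dotp r s| = Real.sqrt ((dotp r s) ^ 2) := (Real.sqrt_sq_eq_abs _).symm
  rw [h2]
  calc Real.sqrt ((dotp r s) ^ 2) ≤ Real.sqrt (dotp r r * dotp s s) := Real.sqrt_le_sqrt h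
    _ = vnorm r * vnorm s := Real.sqrt_mul (dotp_self_nonneg r) _

lemma dotp_add_left (u v w : Fin n → ℝ) : dotp (u + v) w = dotp u w + dotp v w := by
  simp [dotp, add_mul, Finset.sum_add_distrib]

lemma dotp_sub_left (u v w : Fin n → ℝ) : dotp (u - v) w = dotp u w - dotp v w := by
  simp [dotp, sub_mul, Finset.sum_sub_distrib]

lemma dotp_smul_left (c : ℝ) (u v : Fin n → ℝ) : dotp (c • u) v = c * dotp u v := by
  simp [dotp, Finset.mul_sum, mul_assoc]

lemma dotp_smul_right (c : ℝ) (u v : Fin n → ℝ) : dotp u (c • v) = c * dotp u v := by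
  rw [dotp_comm, dotp_smul_left, dotp_comm]

lemma dotp_transpose_mulVec (A : Matrix (Fin m) (Fin n) ℝ) (u : Fin m → ℝ) (w : Fin n → ℝ) :
    dotp (Aᵀ.mulVec u) w = dotp u (A.mulVec w) := by
  simp only [dotp, Matrix.mulVec, dotProduct, Matrix.transpose_apply,
    Finset.sum_mul, Finset.mul_sum]
  rw [Finset.sum_comm]
  exact Finset.sum_congr rfl fun i _ => Finset.sum_congr rfl fun j _ => by ring

lemma dotp_sub_mulVec (A B : Matrix (Fin m) (Fin n) ℝ) (v : Fin n → ℝ) (w : Fin m → ℝ) :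
    dotp ((A - B).mulVec v) w = dotp (A.mulVec v) w - dotp (B.mulVec v) w := by
  rw [Matrix.sub_mulVec, dotp_sub_left]

end Basic
section Net

variable {n m : ℕ}

lemma subnet_zero_eq (nn : ℕ → ℕ) (W : ∀ i : ℕ, Matrix (Fin (nn (i + 1))) (Fin (nn i)) ℝ) :
    ∀ j, subnet nn W j 0 = 0
  | 0 => rfl
  | j + 1 => by
    show reluVec ((W j).mulVec (subnet nn W j 0)) = 0
    rw [subnet_zero_eq nn W j, Matrix.mulVec_zero]
    funext i
    simp [reluVec]

lemma subnet_succ_eq (nn : ℕ → ℕ) (W : ∀ i : ℕ, Matrix (Fin (nn (i + 1))) (Fin (nn i)) ℝ)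
    (j : ℕ) (x : Fin (nn 0) → ℝ) :
    subnet nn W (j + 1) x = (Wplus (W j) (subnet nn W j x)).mulVec (subnet nn W j x) := by
  show reluVec ((W j).mulVec (subnet nn W j x)) = _
  set v := subnet nn W j x
  funext i
  simp only [reluVec, Wplus, Matrix.mulVec, dotProduct, Matrix.of_apply]
  by_cases h : 0 < ∑ j', W j i j' * v j'
  · rw [max_eq_left (le_of_lt h)]
    exact Finset.sum_congr rfl fun j' _ => by rw [if_pos h]
  · rw [max_eq_right (not_lt.1 h)]
    simp [h]

lemma outer_mulVec_dotp (u v w : Fin n → ℝ) :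
    dotp ((outer u u).mulVec v) w = dotp u v * dotp u w := by
  have h1 : ∀ i, ((outer u u).mulVec v) i = u i * dotp u v := by
    intro i
    simp only [outer, Matrix.mulVec, dotProduct, Matrix.of_apply, dotp, Finset.mul_sum]
    exact Finset.sum_congr rfl fun j _ => by ring
  calc dotp ((outer u u).mulVec v) w = ∑ i, u i * dotp u v * w i := by
        simp only [dotp]; exact Finset.sum_congr rfl fun i _ => by rw [h1 i]; rfl
    _ = dotp u v * ∑ i, u i * w i := by rw [Finset.mul_sum]; exact Finset.sum_congr rfl fun i _ => by ring
    _ = dotp u v * dotp u w := rfl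

end Net
section QEval

variable {n : ℕ}

lemma dotp_add_right (u v w : Fin n → ℝ) : dotp u (v + w) = dotp u v + dotp u w := by
  rw [dotp_comm, dotp_add_left, dotp_comm v u, dotp_comm w u]

lemma dotp_sub_right (u v w : Fin n → ℝ) : dotp u (v - w) = dotp u v - dotp u w := by
  rw [dotp_comm, dotp_sub_left, dotp_comm v u, dotp_comm w u]

lemma outer_norm_pair (p v w : Fin n → ℝ) :
    dotp ((outer ((vnorm p)⁻¹ • p) ((vnorm p)⁻¹ • p)).mulVec v) w
      = (dotp p p)⁻¹ * (dotp p v * dotp p w) := by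
  rw [outer_mulVec_dotp, dotp_smul_left, dotp_smul_left, ← vnorm_sq, pow_two, mul_inv]
  ring

lemma Mswap_eval {r s : Fin n → ℝ} (hr : r ≠ 0) (hs : s ≠ 0) :
    dotp ((Mswap r s).mulVec s) r = vnorm r * vnorm s := by
  have hN := vnorm_pos hr
  have hM := vnorm_pos hs
  have hrr : dotp r r = vnorm r ^ 2 := (vnorm_sq r).symm
  have hss : dotp s s = vnorm s ^ 2 := (vnorm_sq s).symm
  have hsr : dotp s r = dotp r s := dotp_comm s r
  have hps : dotp ((vnorm r)⁻¹ • r + (vnorm s)⁻¹ • s) s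
      = vnorm s * (dotp r s / (vnorm r * vnorm s) + 1) := by
    rw [dotp_add_left, dotp_smul_left, dotp_smul_left, hss]
    field_simp
  have hpr : dotp ((vnorm r)⁻¹ • r + (vnorm s)⁻¹ • s) r
      = vnorm r * (dotp r s / (vnorm r * vnorm s) + 1) := by
    rw [dotp_add_left, dotp_smul_left, dotp_smul_left, hrr, hsr]
    field_simp; ring
  have hqs : dotp ((vnorm r)⁻¹ • r - (vnorm s)⁻¹ • s) s
      = -(vnorm s * (1 - dotp r s / (vnorm r * vnorm s))) := by
    rw [dotp_sub_left, dotp_smul_left, dotp_smul_left, hss]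
    field_simp; ring
  have hqr : dotp ((vnorm r)⁻¹ • r - (vnorm s)⁻¹ • s) r
      = vnorm r * (1 - dotp r s / (vnorm r * vnorm s)) := by
    rw [dotp_sub_left, dotp_smul_left, dotp_smul_left, hrr, hsr]
    field_simp
  have hpp : dotp ((vnorm r)⁻¹ • r + (vnorm s)⁻¹ • s) ((vnorm r)⁻¹ • r + (vnorm s)⁻¹ • s)
      = 2 + 2 * (dotp r s / (vnorm r * vnorm s)) := by
    rw [dotp_add_left, dotp_add_right, dotp_add_right, dotp_smul_left, dotp_smul_left,
      dotp_smul_left, dotp_smul_left, dotp_smul_right, dotp_smul_right, dotp_smul_right,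
      dotp_smul_right, hrr, hss, hsr]
    field_simp; ring
  have hqq : dotp ((vnorm r)⁻¹ • r - (vnorm s)⁻¹ • s) ((vnorm r)⁻¹ • r - (vnorm s)⁻¹ • s)
      = 2 - 2 * (dotp r s / (vnorm r * vnorm s)) := by
    rw [dotp_sub_left, dotp_sub_right, dotp_sub_right, dotp_smul_left, dotp_smul_left,
      dotp_smul_left, dotp_smul_left, dotp_smul_right, dotp_smul_right, dotp_smul_right,
      dotp_smul_right, hrr, hss, hsr]
    field_simp; ring
  unfold Mswap
  rw [dotp_sub_mulVec, outer_norm_pair, outer_norm_pair, hps, hpr, hqs, hqr, hpp, hqq]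
  set a := dotp r s / (vnorm r * vnorm s) with ha
  by_cases h1 : a = -1
  · rw [h1]; norm_num; ring
  by_cases h2 : a = 1
  · rw [h2]; norm_num; ring
  have h1' : 2 + 2 * a ≠ 0 := fun hc => h1 (by linarith [hc])
  have h2' : 2 - 2 * a ≠ 0 := fun hc => h2 (by linarith [hc])
  have h3' : 1 + a ≠ 0 := fun hc => h1 (by linarith [hc])
  have h4' : 1 - a ≠ 0 := fun hc => h2 (by linarith [hc])
  field_simp
  ring

lemma Qmat_eval {r s : Fin n → ℝ} (hr : r ≠ 0) (hs : s ≠ 0) :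
    dotp ((Qmat r s).mulVec s) r
      = ((π - ang r s) * dotp r s + Real.sin (ang r s) * (vnorm r * vnorm s)) / (2 * π) := by
  unfold Qmat
  rw [if_neg (by simp [hr, hs])]
  rw [Matrix.add_mulVec, dotp_add_left, Matrix.smul_mulVec, Matrix.smul_mulVec,
    dotp_smul_left, dotp_smul_left, Matrix.one_mulVec, dotp_comm s r, Mswap_eval hr hs]
  ring

lemma Qmat_self_eval {r : Fin n → ℝ} (hr : r ≠ 0) :
    dotp ((Qmat r r).mulVec r) r = dotp r r / 2 := by
  rw [Qmat_eval hr hr]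
  have hdr : dotp r r ≠ 0 := ne_of_gt (dotp_self_pos hr)
  have hang : ang r r = 0 := by
    unfold ang
    rw [show dotp r r / (vnorm r * vnorm r) = 1 by rw [← pow_two, vnorm_sq]; field_simp]
    exact Real.arccos_one
  rw [hang, Real.sin_zero]
  have hpi : (π : ℝ) ≠ 0 := Real.pi_ne_zero
  field_simp
  ring

end QEval
section Analytic

lemma numF_nonneg {a : ℝ} (h1 : -1 ≤ a) (h2 : a ≤ 1) :
    0 ≤ (π - Real.arccos a) * a + Real.sqrt (1 - a ^ 2) := by
  have hsnn : 0 ≤ Real.sqrt (1 - a ^ 2) := Real.sqrt_nonneg _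
  have harc0 : 0 ≤ Real.arccos a := Real.arccos_nonneg a
  have harcpi : Real.arccos a ≤ π := Real.arccos_le_pi a
  rcases le_or_gt 0 a with h | h
  · have : Real.arccos a ≤ π / 2 := Real.arccos_le_pi_div_two.2 h
    nlinarith
  · set θ := Real.arccos a with hθ
    have hθ1 : π / 2 < θ := by
      by_contra hc
      exact absurd (Real.arccos_le_pi_div_two.1 (not_lt.1 hc)) (not_le.2 h)
    have hcos : Real.cos θ = a := Real.cos_arccos h1 h2
    have hsin : Real.sin θ = Real.sqrt (1 - a ^ 2) := Real.sin_arccos a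
    rw [← hsin, ← hcos]
    have hc2 : Real.cos θ = -Real.cos (π - θ) := by
      rw [Real.cos_pi_sub]; ring
    have hs2 : Real.sin θ = Real.sin (π - θ) := (Real.sin_pi_sub θ).symm
    set φ := π - θ with hφ
    have hφ0 : 0 ≤ φ := by simp only [hφ]; linarith
    have hφ2 : φ < π / 2 := by simp only [hφ]; linarith
    rcases eq_or_lt_of_le hφ0 with he | hφpos
    · rw [hc2, hs2, ← he, Real.cos_zero, Real.sin_zero]; ring_nf; exact le_refl 0
    · have htan := Real.lt_tan hφpos hφ2
      have hcφ : 0 < Real.cos φ := Real.cos_pos_of_mem_Ioo ⟨by linarith, hφ2⟩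
      have hmul : φ * Real.cos φ < Real.sin φ := by
        have h' := mul_lt_mul_of_pos_right htan hcφ
        rwa [Real.tan_eq_sin_div_cos, div_mul_cancel₀ _ (ne_of_gt hcφ)] at h'
      rw [hc2, hs2]
      nlinarith
end Analytic
section Analytic2

lemma numF_ge {ε a : ℝ} (hε0 : 0 < ε) (hε : ε ≤ 1 / 10) (h1 : -(5 * ε) ≤ a) (h2 : a ≤ 1) :
    1 - 6 * π * ε ≤ (π - Real.arccos a) * a + Real.sqrt (1 - a ^ 2) := by
  have hpi : (3 : ℝ) < π := Real.pi_gt_three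
  have harc0 : 0 ≤ Real.arccos a := Real.arccos_nonneg a
  have harcpi : Real.arccos a ≤ π := Real.arccos_le_pi a
  rcases le_or_gt 0 a with h | h
  · have harc : Real.arccos a ≤ π / 2 := Real.arccos_le_pi_div_two.2 h
    have hsq : 1 - a ≤ Real.sqrt (1 - a ^ 2) := by
      rw [Real.le_sqrt (by linarith) (by nlinarith)]
      nlinarith
    nlinarith
  · have ha2 : a ^ 2 ≤ (5 * ε) ^ 2 := by nlinarith
    have hle1 : 1 - a ^ 2 ≤ 1 := by nlinarith
    have hge0 : 0 ≤ 1 - a ^ 2 := by nlinarith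
    have hsq : 1 - a ^ 2 ≤ Real.sqrt (1 - a ^ 2) := by
      rw [Real.le_sqrt hge0 hge0]
      nlinarith
    have hterm : π * a ≤ (π - Real.arccos a) * a := by nlinarith
    nlinarith
end Analytic2
section Layer

variable {nn : ℕ → ℕ} {d : ℕ} {W : ∀ i : ℕ, Matrix (Fin (nn (i + 1))) (Fin (nn i)) ℝ} {ε : ℝ}

lemma layer_cross (hG : R2WDCond nn d W ε) {i : ℕ} (hi : i < d) (x y : Fin (nn 0) → ℝ)
    (hr : subnet nn W i x ≠ 0) (hs : subnet nn W i y ≠ 0) :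
    |dotp (subnet nn W (i + 1) x) (subnet nn W (i + 1) y)
      - ((π - ang (subnet nn W i x) (subnet nn W i y)) * dotp (subnet nn W i x) (subnet nn W i y)
        + Real.sin (ang (subnet nn W i x) (subnet nn W i y))
          * (vnorm (subnet nn W i x) * vnorm (subnet nn W i y))) / (2 * π)|
      ≤ ε * vnorm (subnet nn W i y) * vnorm (subnet nn W i x) := by
  have h := hG i hi x y y 0 x 0
  rw [subnet_zero_eq nn W i, sub_zero, sub_zero, dotp_sub_mulVec, ← Matrix.mulVec_mulVec,
    dotp_transpose_mulVec, ← subnet_succ_eq, ← subnet_succ_eq,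
    dotp_comm (subnet nn W (i + 1) y), Qmat_eval hr hs] at h
  exact h

lemma layer_norm (hG : R2WDCond nn d W ε) {i : ℕ} (hi : i < d) (x : Fin (nn 0) → ℝ)
    (hr : subnet nn W i x ≠ 0) :
    |dotp (subnet nn W (i + 1) x) (subnet nn W (i + 1) x)
      - dotp (subnet nn W i x) (subnet nn W i x) / 2|
      ≤ ε * dotp (subnet nn W i x) (subnet nn W i x) := by
  have h := hG i hi x x x 0 x 0
  rw [subnet_zero_eq nn W i, sub_zero, dotp_sub_mulVec, ← Matrix.mulVec_mulVec,
    dotp_transpose_mulVec, ← subnet_succ_eq, Qmat_self_eval hr,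
    mul_assoc, ← pow_two, vnorm_sq] at h
  exact h

end Layer
section Arith

lemma final_arith (e : ℕ) (ε : ℝ) (hε0 : 0 < ε) (hεs : ε ≤ 1 / 9216)
    (hdε : ((e : ℝ) + 1) * ε ≤ 1 / 4608) :
    1 / (4 * π) * (1 / (2 : ℝ) ^ (e + 1)) ≤ (1 / 2 - ε) ^ e * (1 / (2 * π) - 4 * ε) := by
  have hπ : (3 : ℝ) < π := Real.pi_gt_three
  have hπ4 : π < 4 := Real.pi_lt_four
  have hπ0 : (0 : ℝ) < π := by linarith
  have hepos : (0 : ℝ) ≤ (e : ℝ) := Nat.cast_nonneg e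
  have heε : (e : ℝ) * ε ≤ 1 / 4608 := by nlinarith
  have h1 : ((1 : ℝ) / 2 - ε) ^ e = (1 / 2) ^ e * (1 - 2 * ε) ^ e := by
    rw [← mul_pow]; congr 1; ring
  have hbern : 1 + (e : ℝ) * (-(2 * ε)) ≤ (1 + -(2 * ε)) ^ e :=
    one_add_mul_le_pow (by linarith) e
  have h2 : (9 : ℝ) / 10 ≤ (1 - 2 * ε) ^ e := by
    have : (1 : ℝ) + -(2 * ε) = 1 - 2 * ε := by ring
    rw [this] at hbern
    nlinarith
  have hA1 : (1 : ℝ) / 8 ≤ 1 / (2 * π) := by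
    rw [div_le_div_iff₀ (by norm_num) (by linarith)]; linarith
  have hA2 : 1 / (4 * π) ≤ (1 : ℝ) / 12 := by
    rw [div_le_div_iff₀ (by linarith) (by norm_num)]; linarith
  have hfac : (0 : ℝ) ≤ 1 / (2 * π) - 4 * ε := by nlinarith
  have hprod : (9 : ℝ) / 10 * (1 / (2 * π) - 4 * ε) ≤ (1 - 2 * ε) ^ e * (1 / (2 * π) - 4 * ε) :=
    mul_le_mul_of_nonneg_right h2 hfac
  have hhalfpow : (0 : ℝ) < (1 / 2 : ℝ) ^ e := by positivity
  have hgoal2 : 1 / (4 * π) * (1 / 2) ≤ (1 - 2 * ε) ^ e * (1 / (2 * π) - 4 * ε) := by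
    nlinarith
  calc 1 / (4 * π) * (1 / (2 : ℝ) ^ (e + 1))
      = (1 / 2 : ℝ) ^ e * (1 / (4 * π) * (1 / 2)) := by
        rw [← one_div_pow, pow_succ]; ring
    _ ≤ (1 / 2 : ℝ) ^ e * ((1 - 2 * ε) ^ e * (1 / (2 * π) - 4 * ε)) :=
        mul_le_mul_of_nonneg_left hgoal2 (le_of_lt hhalfpow)
    _ = (1 / 2 - ε) ^ e * (1 / (2 * π) - 4 * ε) := by rw [h1]; ring

end Arith
section Helpers

lemma mul_ge_of_sq {s c N M N' M' : ℝ} (hs : 0 ≤ s) (hN : 0 ≤ N) (hM : 0 ≤ M)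
    (hN' : 0 ≤ N') (hsq : s ^ 2 = c) (hx : s * N ≤ N') (hy : s * M ≤ M') :
    c * (N * M) ≤ N' * M' := by
  have h := mul_le_mul hx hy (mul_nonneg hs hM) hN'
  have he : s * N * (s * M) = c * (N * M) := by rw [← hsq]; ring
  linarith [he ▸ h]

lemma neg_five_bound {ε NM NM' D : ℝ} (hε : 0 ≤ ε) (hNM : 0 ≤ NM)
    (h1 : -(ε * NM) ≤ D) (h2 : 2 / 5 * NM ≤ NM') : -(5 * ε) * NM' ≤ D := by
  nlinarith

lemma ratio_step {ε A B : ℝ} (hε : ε ≤ 1 / 10) (hA : 0 ≤ A)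
    (h : (1 / 2 - ε) * A ≤ B) : 2 / 5 * A ≤ B := by nlinarith

end Helpers
set_option maxHeartbeats 1000000 in
theorem statement14 (nn : ℕ → ℕ) (d : ℕ) (hd : 2 ≤ d)
    (W : ∀ i : ℕ, Matrix (Fin (nn (i + 1))) (Fin (nn i)) ℝ) (ε : ℝ)
    (hε : 0 < ε) (hεd : 2 * (d : ℝ) * ε < 1) (hε10 : 10 * ε < 1)
    (hεpi : 16 * π * (d : ℝ) * Real.sqrt ε < 1)
    (hG : R2WDCond nn d W ε) :
    ∀ x y : Fin (nn 0) → ℝ, x ≠ 0 → y ≠ 0 →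
      1 / (4 * π) * (1 / 2 ^ d) * vnorm x * vnorm y ≤
        dotp (subnet nn W d x) (subnet nn W d y) := by
  intro x y hx hy
  have hπ : (3 : ℝ) < π := Real.pi_gt_three
  have hπ0 : (0 : ℝ) < π := by linarith
  have hε110 : ε ≤ 1 / 10 := by linarith
  -- smallness consequences of `hεpi`
  have hsε : 0 < Real.sqrt ε := Real.sqrt_pos.2 hε
  have hsε2 : Real.sqrt ε ^ 2 = ε := Real.sq_sqrt (le_of_lt hε)
  have hd2 : (2 : ℝ) ≤ (d : ℝ) := by exact_mod_cast hd
  have hdse : (d : ℝ) * Real.sqrt ε < 1 / 48 := by nlinarith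
  have hse : Real.sqrt ε ≤ 1 / 96 := by nlinarith
  have hdε : (d : ℝ) * ε ≤ 1 / 4608 := by nlinarith
  have hεsmall : ε ≤ 1 / 9216 := by nlinarith
  have hhalf : (0 : ℝ) < 1 / 2 - ε := by linarith
  -- main induction
  have key : ∀ i, i ≤ d →
      subnet nn W i x ≠ 0 ∧ subnet nn W i y ≠ 0 ∧
      (1 / 2 - ε) ^ i * dotp x x ≤ dotp (subnet nn W i x) (subnet nn W i x) ∧
      (1 / 2 - ε) ^ i * dotp y y ≤ dotp (subnet nn W i y) (subnet nn W i y) ∧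
      (1 ≤ i → -(5 * ε) * (vnorm (subnet nn W i x) * vnorm (subnet nn W i y))
          ≤ dotp (subnet nn W i x) (subnet nn W i y)) := by
    intro i
    induction i with
    | zero =>
      intro _
      exact ⟨hx, hy, by simp [subnet], by simp [subnet], by omega⟩
    | succ i ih =>
      intro hi1
      have hid : i < d := Nat.lt_of_succ_le hi1
      obtain ⟨hrne, hsne, hNx, hNy, _⟩ := ih (Nat.le_of_lt hid)
      have hXpos : 0 < dotp x x := dotp_self_pos hx
      have hYpos : 0 < dotp y y := dotp_self_pos hy
      have hpowpos : (0 : ℝ) < (1 / 2 - ε) ^ i := pow_pos hhalf i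
      have hrrpos : 0 < dotp (subnet nn W i x) (subnet nn W i x) :=
        lt_of_lt_of_le (mul_pos hpowpos hXpos) hNx
      have hsspos : 0 < dotp (subnet nn W i y) (subnet nn W i y) :=
        lt_of_lt_of_le (mul_pos hpowpos hYpos) hNy
      have hvr : vnorm (subnet nn W i x) * vnorm (subnet nn W i x)
          = dotp (subnet nn W i x) (subnet nn W i x) := by rw [← pow_two, vnorm_sq]
      have hvs : vnorm (subnet nn W i y) * vnorm (subnet nn W i y)
          = dotp (subnet nn W i y) (subnet nn W i y) := by rw [← pow_two, vnorm_sq]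
      -- norm growth
      have hnx := abs_le.1 (layer_norm hG hid x hrne)
      have hny := abs_le.1 (layer_norm hG hid y hsne)
      have hstepx : (1 / 2 - ε) * dotp (subnet nn W i x) (subnet nn W i x)
          ≤ dotp (subnet nn W (i + 1) x) (subnet nn W (i + 1) x) := by
        linarith [hnx.1]
      have hstepy : (1 / 2 - ε) * dotp (subnet nn W i y) (subnet nn W i y)
          ≤ dotp (subnet nn W (i + 1) y) (subnet nn W (i + 1) y) := by
        linarith [hny.1]
      have hNx' : (1 / 2 - ε) ^ (i + 1) * dotp x x
          ≤ dotp (subnet nn W (i + 1) x) (subnet nn W (i + 1) x) := by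
        calc (1 / 2 - ε) ^ (i + 1) * dotp x x = (1 / 2 - ε) * ((1 / 2 - ε) ^ i * dotp x x) := by
              rw [pow_succ]; ring
          _ ≤ (1 / 2 - ε) * dotp (subnet nn W i x) (subnet nn W i x) :=
              mul_le_mul_of_nonneg_left hNx (le_of_lt hhalf)
          _ ≤ _ := hstepx
      have hNy' : (1 / 2 - ε) ^ (i + 1) * dotp y y
          ≤ dotp (subnet nn W (i + 1) y) (subnet nn W (i + 1) y) := by
        calc (1 / 2 - ε) ^ (i + 1) * dotp y y = (1 / 2 - ε) * ((1 / 2 - ε) ^ i * dotp y y) := by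
              rw [pow_succ]; ring
          _ ≤ (1 / 2 - ε) * dotp (subnet nn W i y) (subnet nn W i y) :=
              mul_le_mul_of_nonneg_left hNy (le_of_lt hhalf)
          _ ≤ _ := hstepy
      have hrrpos' : 0 < dotp (subnet nn W (i + 1) x) (subnet nn W (i + 1) x) :=
        lt_of_lt_of_le (mul_pos (pow_pos hhalf _) hXpos) hNx'
      have hsspos' : 0 < dotp (subnet nn W (i + 1) y) (subnet nn W (i + 1) y) :=
        lt_of_lt_of_le (mul_pos (pow_pos hhalf _) hYpos) hNy'
      have hrne' : subnet nn W (i + 1) x ≠ 0 := by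
        intro hc; rw [hc] at hrrpos'; simp [dotp] at hrrpos'
      have hsne' : subnet nn W (i + 1) y ≠ 0 := by
        intro hc; rw [hc] at hsspos'; simp [dotp] at hsspos'
      refine ⟨hrne', hsne', hNx', hNy', fun _ => ?_⟩
      -- inner-product lower bound
      have hNpos : 0 < vnorm (subnet nn W i x) := vnorm_pos hrne
      have hMpos : 0 < vnorm (subnet nn W i y) := vnorm_pos hsne
      have hNM : 0 < vnorm (subnet nn W i x) * vnorm (subnet nn W i y) :=
        mul_pos hNpos hMpos
      have hCS := abs_le.1 (abs_dotp_le (subnet nn W i x) (subnet nn W i y))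
      set a : ℝ := dotp (subnet nn W i x) (subnet nn W i y)
        / (vnorm (subnet nn W i x) * vnorm (subnet nn W i y)) with hadef
      have ha1 : -1 ≤ a := by
        rw [hadef, le_div_iff₀ hNM]; linarith [hCS.1]
      have ha2 : a ≤ 1 := by
        rw [hadef, div_le_one hNM]; linarith [hCS.2]
      have hD : dotp (subnet nn W i x) (subnet nn W i y)
          = a * (vnorm (subnet nn W i x) * vnorm (subnet nn W i y)) := by
        rw [hadef]; field_simp
      have hang : ang (subnet nn W i x) (subnet nn W i y) = Real.arccos a := rfl
      have hsin : Real.sin (ang (subnet nn W i x) (subnet nn W i y))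
          = Real.sqrt (1 - a ^ 2) := by rw [hang, Real.sin_arccos]
      have hQnn : 0 ≤ ((π - ang (subnet nn W i x) (subnet nn W i y))
            * dotp (subnet nn W i x) (subnet nn W i y)
          + Real.sin (ang (subnet nn W i x) (subnet nn W i y))
            * (vnorm (subnet nn W i x) * vnorm (subnet nn W i y))) / (2 * π) := by
        rw [hD, hsin, hang]
        have hnum := numF_nonneg ha1 ha2
        have heq : (π - Real.arccos a) * (a * (vnorm (subnet nn W i x) * vnorm (subnet nn W i y)))
            + Real.sqrt (1 - a ^ 2) * (vnorm (subnet nn W i x) * vnorm (subnet nn W i y))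
            = ((π - Real.arccos a) * a + Real.sqrt (1 - a ^ 2))
              * (vnorm (subnet nn W i x) * vnorm (subnet nn W i y)) := by ring
        rw [heq]
        exact div_nonneg (mul_nonneg hnum (le_of_lt hNM)) (by linarith)
      have hcross := abs_le.1 (layer_cross hG hid x y hrne hsne)
      have hlow : -(ε * (vnorm (subnet nn W i x) * vnorm (subnet nn W i y)))
          ≤ dotp (subnet nn W (i + 1) x) (subnet nn W (i + 1) y) := by
        linarith [hcross.1, hQnn]
      -- norm ratio
      have hratx : Real.sqrt (2 / 5) * vnorm (subnet nn W i x) ≤ vnorm (subnet nn W (i + 1) x) := by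
        have h25 : (2 / 5 : ℝ) * dotp (subnet nn W i x) (subnet nn W i x)
            ≤ dotp (subnet nn W (i + 1) x) (subnet nn W (i + 1) x) :=
          ratio_step hε110 hrrpos.le hstepx
        calc Real.sqrt (2 / 5) * vnorm (subnet nn W i x)
            = Real.sqrt ((2 / 5) * dotp (subnet nn W i x) (subnet nn W i x)) := by
              rw [Real.sqrt_mul (by norm_num)]; rfl
          _ ≤ _ := Real.sqrt_le_sqrt h25
      have hraty : Real.sqrt (2 / 5) * vnorm (subnet nn W i y) ≤ vnorm (subnet nn W (i + 1) y) := by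
        have h25 : (2 / 5 : ℝ) * dotp (subnet nn W i y) (subnet nn W i y)
            ≤ dotp (subnet nn W (i + 1) y) (subnet nn W (i + 1) y) :=
          ratio_step hε110 hsspos.le hstepy
        calc Real.sqrt (2 / 5) * vnorm (subnet nn W i y)
            = Real.sqrt ((2 / 5) * dotp (subnet nn W i y) (subnet nn W i y)) := by
              rw [Real.sqrt_mul (by norm_num)]; rfl
          _ ≤ _ := Real.sqrt_le_sqrt h25
      have hs25 : Real.sqrt (2 / 5) ^ 2 = 2 / 5 := Real.sq_sqrt (by norm_num)
      have hs25nn : 0 ≤ Real.sqrt (2 / 5) := Real.sqrt_nonneg _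
      have hprod : (2 / 5 : ℝ) * (vnorm (subnet nn W i x) * vnorm (subnet nn W i y))
          ≤ vnorm (subnet nn W (i + 1) x) * vnorm (subnet nn W (i + 1) y) :=
        mul_ge_of_sq hs25nn (vnorm_nonneg _) (vnorm_nonneg _) (vnorm_nonneg _) hs25 hratx hraty
      exact neg_five_bound hε.le hNM.le hlow hprod
  -- final step
  obtain ⟨e, rfl⟩ : ∃ e, d = e + 1 := ⟨d - 1, by omega⟩
  have he1 : 1 ≤ e := by omega
  obtain ⟨hrne, hsne, hNx, hNy, hcb⟩ := key e (Nat.le_succ e)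
  have hcb' := hcb he1
  have hNpos : 0 < vnorm (subnet nn W e x) := vnorm_pos hrne
  have hMpos : 0 < vnorm (subnet nn W e y) := vnorm_pos hsne
  have hNM : 0 < vnorm (subnet nn W e x) * vnorm (subnet nn W e y) := mul_pos hNpos hMpos
  have hCS := abs_le.1 (abs_dotp_le (subnet nn W e x) (subnet nn W e y))
  set a : ℝ := dotp (subnet nn W e x) (subnet nn W e y)
    / (vnorm (subnet nn W e x) * vnorm (subnet nn W e y)) with hadef
  have ha1 : -(5 * ε) ≤ a := by
    rw [hadef, le_div_iff₀ hNM]; linarith [hcb']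
  have ha2 : a ≤ 1 := by
    rw [hadef, div_le_one hNM]; linarith [hCS.2]
  have hD : dotp (subnet nn W e x) (subnet nn W e y)
      = a * (vnorm (subnet nn W e x) * vnorm (subnet nn W e y)) := by
    rw [hadef]; field_simp
  have hang : ang (subnet nn W e x) (subnet nn W e y) = Real.arccos a := rfl
  have hsin : Real.sin (ang (subnet nn W e x) (subnet nn W e y))
      = Real.sqrt (1 - a ^ 2) := by rw [hang, Real.sin_arccos]
  have hnum := numF_ge hε hε110 ha1 ha2
  have hcross := abs_le.1 (layer_cross hG (Nat.lt_succ_self e) x y hrne hsne)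
  have h2π : (0 : ℝ) < 2 * π := by linarith
  have hQge : (1 - 6 * π * ε) * (vnorm (subnet nn W e x) * vnorm (subnet nn W e y)) / (2 * π)
      ≤ ((π - ang (subnet nn W e x) (subnet nn W e y))
            * dotp (subnet nn W e x) (subnet nn W e y)
        + Real.sin (ang (subnet nn W e x) (subnet nn W e y))
          * (vnorm (subnet nn W e x) * vnorm (subnet nn W e y))) / (2 * π) := by
    rw [hD, hsin, hang]
    have heq : (π - Real.arccos a)
          * (a * (vnorm (subnet nn W e x) * vnorm (subnet nn W e y)))
        + Real.sqrt (1 - a ^ 2) * (vnorm (subnet nn W e x) * vnorm (subnet nn W e y))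
        = ((π - Real.arccos a) * a + Real.sqrt (1 - a ^ 2))
          * (vnorm (subnet nn W e x) * vnorm (subnet nn W e y)) := by ring
    rw [heq]
    exact (div_le_div_iff_of_pos_right h2π).2 (mul_le_mul_of_nonneg_right hnum (le_of_lt hNM))
  have hlow : (1 - 6 * π * ε) * (vnorm (subnet nn W e x) * vnorm (subnet nn W e y)) / (2 * π)
      - ε * vnorm (subnet nn W e y) * vnorm (subnet nn W e x)
      ≤ dotp (subnet nn W (e + 1) x) (subnet nn W (e + 1) y) := by
    linarith [hcross.1, hQge]
  have h8 : (1 : ℝ) / 8 ≤ 1 / (2 * π) := by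
    rw [div_le_div_iff₀ (by norm_num) h2π]; linarith [Real.pi_lt_four]
  have hcoefpos : (0 : ℝ) ≤ 1 / (2 * π) - 4 * ε := by linarith
  have heq2 : (1 - 6 * π * ε) * (vnorm (subnet nn W e x) * vnorm (subnet nn W e y)) / (2 * π)
      - ε * vnorm (subnet nn W e y) * vnorm (subnet nn W e x)
      = (vnorm (subnet nn W e x) * vnorm (subnet nn W e y)) * (1 / (2 * π) - 4 * ε) := by
    field_simp
    ring
  have hDlow : (vnorm (subnet nn W e x) * vnorm (subnet nn W e y)) * (1 / (2 * π) - 4 * ε)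
      ≤ dotp (subnet nn W (e + 1) x) (subnet nn W (e + 1) y) := by
    rw [← heq2]; exact hlow
  -- lower bound on the product of norms
  have hsx : Real.sqrt ((1 / 2 - ε) ^ e) * vnorm x ≤ vnorm (subnet nn W e x) := by
    calc Real.sqrt ((1 / 2 - ε) ^ e) * vnorm x
        = Real.sqrt ((1 / 2 - ε) ^ e * dotp x x) := by
          rw [Real.sqrt_mul (pow_nonneg hhalf.le e)]; rfl
      _ ≤ Real.sqrt (dotp (subnet nn W e x) (subnet nn W e x)) := Real.sqrt_le_sqrt hNx
      _ = vnorm (subnet nn W e x) := rfl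
  have hsy : Real.sqrt ((1 / 2 - ε) ^ e) * vnorm y ≤ vnorm (subnet nn W e y) := by
    calc Real.sqrt ((1 / 2 - ε) ^ e) * vnorm y
        = Real.sqrt ((1 / 2 - ε) ^ e * dotp y y) := by
          rw [Real.sqrt_mul (pow_nonneg hhalf.le e)]; rfl
      _ ≤ Real.sqrt (dotp (subnet nn W e y) (subnet nn W e y)) := Real.sqrt_le_sqrt hNy
      _ = vnorm (subnet nn W e y) := rfl
  have hsq : Real.sqrt ((1 / 2 - ε) ^ e) ^ 2 = (1 / 2 - ε) ^ e := Real.sq_sqrt (pow_nonneg hhalf.le e)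
  have hNMge : (1 / 2 - ε) ^ e * (vnorm x * vnorm y)
      ≤ vnorm (subnet nn W e x) * vnorm (subnet nn W e y) :=
    mul_ge_of_sq (Real.sqrt_nonneg _) (vnorm_nonneg x) (vnorm_nonneg y)
      (vnorm_nonneg _) hsq hsx hsy
  have harith := final_arith e ε hε hεsmall (by push_cast at hdε ⊢; linarith)
  have hvxy : 0 ≤ vnorm x * vnorm y := mul_nonneg (vnorm_nonneg x) (vnorm_nonneg y)
  calc 1 / (4 * π) * (1 / 2 ^ (e + 1)) * vnorm x * vnorm y
      = (1 / (4 * π) * (1 / (2 : ℝ) ^ (e + 1))) * (vnorm x * vnorm y) := by ring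
    _ ≤ ((1 / 2 - ε) ^ e * (1 / (2 * π) - 4 * ε)) * (vnorm x * vnorm y) :=
        mul_le_mul_of_nonneg_right harith hvxy
    _ = ((1 / 2 - ε) ^ e * (vnorm x * vnorm y)) * (1 / (2 * π) - 4 * ε) := by ring
    _ ≤ (vnorm (subnet nn W e x) * vnorm (subnet nn W e y)) * (1 / (2 * π) - 4 * ε) :=
        mul_le_mul_of_nonneg_right hNMge hcoefpos
    _ ≤ dotp (subnet nn W (e + 1) x) (subnet nn W (e + 1) y) := hDlow
end R2WDCFormal
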